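/- If a unit-speed spherical curve ξ = (x,y,z) has spherical angular momentum K(z) = −c/z with 0 < c < 1/2, then z satisfies z'² = (z²(1−z²) − c²)/z², and the function z(s) = √((1 + √(1−4c²) sin 2s)/2) solves this equation with the constraint 1 − √(1−4c²) < 2z² < 1 + √(1−4c²). -/

import Mathlib

open Real

/-- If a unit-speed spherical curve ξ = (x,y,z), z > 0, has spherical
angular momentum K = −c/z with 0 < c < 1/2, then z'² = (z²(1−z²) − c²)/z²; moreover
the function z(s) = √((1 + √(1−4c²) sin 2s)/2) solves this ODE, with the constraint
1 − √(1−4c²) < 2z² < 1 + √(1−4c²) (away from the extremal points of sin 2s). -/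
theorem catenary_z_ode_and_solution
    (c : ℝ) (hc : 0 < c) (hc' : c < 1/2)
    (x y z : ℝ → ℝ)
    (hx : Differentiable ℝ x) (hy : Differentiable ℝ y) (hz : Differentiable ℝ z)
    (hzpos : ∀ s, 0 < z s)
    (hsphere : ∀ s, x s ^ 2 + y s ^ 2 + z s ^ 2 = 1)
    (hunit : ∀ s, deriv x s ^ 2 + deriv y s ^ 2 + deriv z s ^ 2 = 1)
    (hmom : ∀ s, deriv x s * y s - x s * deriv y s = -c / z s)
    (zc : ℝ → ℝ)
    (hzc : ∀ s, zc s = Real.sqrt ((1 + Real.sqrt (1 - 4*c^2) * Real.sin (2*s)) / 2)) :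
    (∀ s, deriv z s ^ 2 = (z s ^ 2 * (1 - z s ^ 2) - c ^ 2) / z s ^ 2) ∧
    (∀ s, deriv zc s ^ 2 = (zc s ^ 2 * (1 - zc s ^ 2) - c ^ 2) / zc s ^ 2) ∧
    (∀ s, Real.sin (2*s) ^ 2 ≠ 1 →
      1 - Real.sqrt (1 - 4*c^2) < 2 * zc s ^ 2 ∧
      2 * zc s ^ 2 < 1 + Real.sqrt (1 - 4*c^2)) := by
  set b := Real.sqrt (1 - 4*c^2) with hb
  have h4c : (0:ℝ) < 1 - 4*c^2 := by nlinarith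
  have hb0 : 0 < b := Real.sqrt_pos.mpr h4c
  have hbsq : b ^ 2 = 1 - 4*c^2 := Real.sq_sqrt h4c.le
  have hb1 : b < 1 := by nlinarith
  have hupos : ∀ s, 0 < (1 + b * Real.sin (2*s)) / 2 := by
    intro s
    have := Real.neg_one_le_sin (2*s)
    nlinarith
  have hzc2 : ∀ s, zc s ^ 2 = (1 + b * Real.sin (2*s)) / 2 := by
    intro s
    rw [hzc s]
    exact Real.sq_sqrt (hupos s).le
  have hzcpos : ∀ s, 0 < zc s := by
    intro s; rw [hzc s]; exact Real.sqrt_pos.mpr (hupos s)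
  have hder : ∀ s, deriv zc s = b * Real.cos (2*s) / (2 * zc s) := by
    intro s
    have h2s : HasDerivAt (fun t : ℝ => 2 * t) 2 s := by
      simpa using (hasDerivAt_id s).const_mul 2
    have hsin : HasDerivAt (fun t : ℝ => Real.sin (2*t)) (Real.cos (2*s) * 2) s :=
      (Real.hasDerivAt_sin (2*s)).comp s h2s
    have hu : HasDerivAt (fun t : ℝ => (1 + b * Real.sin (2*t)) / 2)
        (b * (Real.cos (2*s) * 2) / 2) s :=
      ((hsin.const_mul b).const_add 1).div_const 2
    have hsq := hu.sqrt (ne_of_gt (hupos s))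
    have : HasDerivAt zc (b * (Real.cos (2*s) * 2) / 2 /
        (2 * Real.sqrt ((1 + b * Real.sin (2*s)) / 2))) s := by
      have heq : zc = fun t => Real.sqrt ((1 + b * Real.sin (2*t)) / 2) := funext hzc
      rw [heq]; exact hsq
    rw [this.deriv, ← hzc s]
    ring
  refine ⟨?_, ?_, ?_⟩
  · intro s
    have hzs := (hzpos s).ne'
    have hcon : deriv x s * x s + deriv y s * y s + deriv z s * z s = 0 := by
      have hd : HasDerivAt (fun t => x t ^ 2 + y t ^ 2 + z t ^ 2)
          (2 * x s * deriv x s + 2 * y s * deriv y s + 2 * z s * deriv z s) s := by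
        have hx' := (hx s).hasDerivAt
        have hy' := (hy s).hasDerivAt
        have hz' := (hz s).hasDerivAt
        have := ((hx'.pow 2).add (hy'.pow 2)).add (hz'.pow 2)
        exact this.congr_deriv (by norm_num)
      have hconst : (fun t => x t ^ 2 + y t ^ 2 + z t ^ 2) = fun _ => (1:ℝ) :=
        funext hsphere
      have := hd.deriv
      rw [hconst, deriv_const] at this
      linarith [this]
    have hm : (deriv x s * y s - x s * deriv y s) * z s = -c := by
      rw [hmom s]; field_simp
    have hL : (1 - deriv z s ^ 2) * (1 - z s ^ 2) =
        (z s * deriv z s) ^ 2 + (deriv x s * y s - x s * deriv y s) ^ 2 := by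
      have hu : x s ^ 2 + y s ^ 2 = 1 - z s ^ 2 := by linarith [hsphere s]
      have hv : deriv x s ^ 2 + deriv y s ^ 2 = 1 - deriv z s ^ 2 := by linarith [hunit s]
      have hw2 : (z s * deriv z s) ^ 2 = (deriv x s * x s + deriv y s * y s) ^ 2 := by
        have hw : deriv x s * x s + deriv y s * y s = -(z s * deriv z s) := by
          linarith [hcon]
        rw [hw]; ring
      rw [← hu, ← hv, hw2]; ring
    have hk2 : (deriv x s * y s - x s * deriv y s) ^ 2 * z s ^ 2 = c ^ 2 := by
      calc (deriv x s * y s - x s * deriv y s) ^ 2 * z s ^ 2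
          = ((deriv x s * y s - x s * deriv y s) * z s) ^ 2 := by ring
        _ = (-c) ^ 2 := by rw [hm]
        _ = c ^ 2 := by ring
    rw [eq_div_iff (pow_ne_zero 2 hzs)]
    linear_combination (-(z s ^ 2)) * hL - hk2
  · intro s
    have hzs := (hzcpos s).ne'
    have hC := Real.sin_sq_add_cos_sq (2*s)
    have hq := hzc2 s
    rw [hder s, eq_div_iff (pow_ne_zero 2 hzs), div_pow,
      div_mul_eq_mul_div, div_eq_iff (pow_ne_zero 2 (by positivity : (2:ℝ) * zc s ≠ 0))]
    linear_combination (zc s ^ 2) * hbsq +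
      (4 * zc s ^ 4 - 2 * zc s ^ 2 + 2 * zc s ^ 2 * b * Real.sin (2*s)) * hq +
      (b ^ 2 * zc s ^ 2) * hC
  · intro s hs
    have h1 : -1 < Real.sin (2*s) := by
      rcases lt_or_eq_of_le (Real.neg_one_le_sin (2*s)) with h | h
      · exact h
      · exact absurd (by rw [← h]; ring) hs
    have h2 : Real.sin (2*s) < 1 := by
      rcases lt_or_eq_of_le (Real.sin_le_one (2*s)) with h | h
      · exact h
      · exact absurd (by rw [h]; ring) hs
    rw [hzc2 s]
    constructor <;> nlinarith
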